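/- Let v ∈ ℝ^(n+2) be a non-zero light-like vector and v∞ ∈ ℝ^(n+2) a vector with B(v, v∞) ≠ 0. Then the subspace W = {u ∈ ℝ^(n+2) : B(u,v) = 0 and B(u,v∞) = 0} has real dimension n, and the restriction of B to W is positive definite: B(u,u) > 0 for every non-zero u ∈ W. (This is the statement that the tangent space to the conic section S_{v∞} at v is a Euclidean n-space.) -/

import Mathlib

/-- The Minkowski bilinear form of signature `(n+1, 1)` on `ℝ^(n+2)`. -/
noncomputable def B (n : ℕ) (u v : Fin (n + 2) → ℝ) : ℝ :=
  (∑ i : Fin (n + 1), u i.castSucc * v i.castSucc) -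
    u (Fin.last (n + 1)) * v (Fin.last (n + 1))

lemma B_symm (n : ℕ) (u v : Fin (n + 2) → ℝ) : B n u v = B n v u := by
  simp only [B, mul_comm]

/-- `B` as a linear functional in its first argument. -/
noncomputable def Bl (n : ℕ) (w : Fin (n + 2) → ℝ) : (Fin (n + 2) → ℝ) →ₗ[ℝ] ℝ where
  toFun u := B n u w
  map_add' u v := by simp [B, add_mul, Finset.sum_add_distrib]; ring
  map_smul' c u := by simp only [B, Pi.smul_apply, smul_eq_mul, RingHom.id_apply,
    Finset.mul_sum, mul_sub, mul_assoc]

lemma Bl_apply (n : ℕ) (w u : Fin (n + 2) → ℝ) : Bl n w u = B n u w := rfl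

lemma statement2_dim (n : ℕ) (v vinf : Fin (n + 2) → ℝ)
    (hnull : B n v v = 0) (hvinf : B n v vinf ≠ 0)
    (W : Submodule ℝ (Fin (n + 2) → ℝ))
    (hW : ∀ u, u ∈ W ↔ (B n u v = 0 ∧ B n u vinf = 0)) :
    Module.finrank ℝ W = n := by
  set L : (Fin (n + 2) → ℝ) →ₗ[ℝ] ℝ × ℝ := (Bl n v).prod (Bl n vinf) with hL
  have hker : W = LinearMap.ker L := by
    ext u
    simp [hW u, L, Bl_apply, LinearMap.mem_ker, Prod.ext_iff]
  have hsurj : LinearMap.range L = ⊤ := by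
    rw [LinearMap.range_eq_top]
    intro ⟨a, b⟩
    set c := B n v vinf with hc
    refine ⟨((b - (a / c) * B n vinf vinf) / c) • v + (a / c) • vinf, ?_⟩
    have h1 : B n vinf v = c := B_symm n vinf v
    simp only [L, LinearMap.prod_apply, Function.prod, map_add, map_smul, Bl_apply, h1, hnull,
      smul_eq_mul, Prod.ext_iff, Prod.fst_add, Prod.snd_add, Prod.smul_fst, Prod.smul_snd]
    constructor <;> field_simp <;> ring
  have := LinearMap.finrank_range_add_finrank_ker L
  rw [hsurj, finrank_top] at this
  simp [Module.finrank_pi] at this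
  rw [hker]
  omega

lemma statement2_pos (n : ℕ) (v vinf : Fin (n + 2) → ℝ)
    (hv0 : v ≠ 0) (hnull : B n v v = 0) (hvinf : B n v vinf ≠ 0)
    (u : Fin (n + 2) → ℝ) (hu1 : B n u v = 0) (hu2 : B n u vinf = 0) (hu0 : u ≠ 0) :
    0 < B n u u := by
  set x : EuclideanSpace ℝ (Fin (n + 1)) := WithLp.toLp 2 (fun i : Fin (n + 1) => u i.castSucc) with hx
  set a : EuclideanSpace ℝ (Fin (n + 1)) := WithLp.toLp 2 (fun i : Fin (n + 1) => v i.castSucc) with ha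
  set t : ℝ := u (Fin.last (n + 1)) with ht
  set s : ℝ := v (Fin.last (n + 1)) with hs
  have hinner : ∀ y z : EuclideanSpace ℝ (Fin (n + 1)),
      (inner ℝ y z : ℝ) = ∑ i, y i * z i := by
    intro y z
    simp [PiLp.inner_apply, mul_comm]
  have haa : (inner ℝ a a : ℝ) = s * s := by
    rw [hinner]
    have := hnull
    simp only [B] at this
    linarith
  have hxa : (inner ℝ x a : ℝ) = t * s := by
    rw [hinner]
    have := hu1
    simp only [B] at this
    linarith
  -- s ≠ 0
  have hs0 : s ≠ 0 := by
    intro h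
    have ha0 : a = 0 := by
      have : (inner ℝ a a : ℝ) = 0 := by rw [haa, h]; ring
      exact inner_self_eq_zero.mp this
    apply hv0
    funext i
    refine Fin.lastCases ?_ ?_ i
    · exact h
    · intro j
      have := congrArg (fun y : EuclideanSpace ℝ (Fin (n + 1)) => y j) ha0
      exact this
  have ha0 : a ≠ 0 := by
    intro h
    rw [h, inner_zero_left] at haa
    exact hs0 (by nlinarith)
  -- Cauchy-Schwarz
  have hcs : (inner ℝ x a : ℝ) ^ 2 ≤ (inner ℝ x x : ℝ) * (inner ℝ a a : ℝ) := by
    have h1 := abs_real_inner_le_norm x a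
    have h2 : (inner ℝ x x : ℝ) = ‖x‖ ^ 2 := real_inner_self_eq_norm_sq x
    have h3 : (inner ℝ a a : ℝ) = ‖a‖ ^ 2 := real_inner_self_eq_norm_sq a
    rw [h2, h3]
    nlinarith [abs_nonneg (inner ℝ x a : ℝ), sq_abs (inner ℝ x a : ℝ)]
  have hBuu : B n u u = (inner ℝ x x : ℝ) - t * t := by
    rw [hinner]
    simp [B, hx, ht]
  rw [hBuu]
  have hge : t * t ≤ (inner ℝ x x : ℝ) := by
    rw [hxa, haa] at hcs
    have hss : 0 < s * s := mul_self_pos.mpr hs0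
    nlinarith
  rcases lt_or_eq_of_le hge with h | h
  · linarith
  -- equality case: u = r • v, contradiction with B u vinf = 0
  · exfalso
    have hx0 : x ≠ 0 := by
      intro h0
      rw [h0, inner_zero_left] at h
      have ht0 : t = 0 := by nlinarith
      apply hu0
      funext i
      refine Fin.lastCases ht0 (fun j => congrArg (fun y : EuclideanSpace ℝ (Fin (n + 1)) => y j) h0) i
    have heq : ‖(inner ℝ x a : ℝ)‖ = ‖x‖ * ‖a‖ := by
      have h2 : (inner ℝ x x : ℝ) = ‖x‖ ^ 2 := real_inner_self_eq_norm_sq x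
      have h3 : (inner ℝ a a : ℝ) = ‖a‖ ^ 2 := real_inner_self_eq_norm_sq a
      have e1 : (inner ℝ x a : ℝ) ^ 2 = (inner ℝ x x : ℝ) * (inner ℝ a a : ℝ) := by
        rw [hxa, haa, ← h]; ring
      have : (inner ℝ x a : ℝ) ^ 2 = (‖x‖ * ‖a‖) ^ 2 := by
        rw [e1, h2, h3]; ring
      have hn : 0 ≤ ‖x‖ * ‖a‖ := by positivity
      rw [Real.norm_eq_abs]
      nlinarith [abs_nonneg (inner ℝ x a : ℝ), sq_abs (inner ℝ x a : ℝ)]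
    obtain ⟨r, hr0, hra⟩ := (norm_inner_eq_norm_iff hx0 ha0).mp heq
    have hsrt : s = r * t := by
      have h1 : (inner ℝ x a : ℝ) = r * (inner ℝ x x : ℝ) := by
        rw [hra, real_inner_smul_right]
      rw [hxa, ← h] at h1
      have := mul_left_cancel₀ (show t ≠ 0 by
        intro ht0
        rw [ht0, mul_zero] at h
        have : x = 0 := inner_self_eq_zero.mp h.symm
        exact hx0 this) (by linarith [h1] : t * s = t * (r * t) )
      linarith [this]
    have hveq : v = r • u := by
      funext i
      refine Fin.lastCases ?_ ?_ i
      · simp only [Pi.smul_apply, smul_eq_mul]; exact hsrt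
      · intro j
        have := congrArg (fun y : EuclideanSpace ℝ (Fin (n + 1)) => y j) hra
        simp only [PiLp.smul_apply, Pi.smul_apply, smul_eq_mul] at this ⊢
        exact this
    apply hvinf
    have : B n v vinf = r * B n u vinf := by
      simp [B, hveq, Finset.mul_sum, mul_sub, mul_assoc]
    rw [this, hu2, mul_zero]

/-- For a non-zero light-like `v` and `v∞` with `B(v,v∞) ≠ 0`, the subspace
`W = {u : B(u,v) = 0 ∧ B(u,v∞) = 0}` has dimension `n` and the restriction of `B` to `W`
is positive definite. -/
theorem statement2 (n : ℕ) (v vinf : Fin (n + 2) → ℝ)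
    (hv0 : v ≠ 0) (hnull : B n v v = 0) (hvinf : B n v vinf ≠ 0)
    (W : Submodule ℝ (Fin (n + 2) → ℝ))
    (hW : ∀ u, u ∈ W ↔ (B n u v = 0 ∧ B n u vinf = 0)) :
    Module.finrank ℝ W = n ∧ ∀ u ∈ W, u ≠ 0 → 0 < B n u u := by
  refine ⟨statement2_dim n v vinf hnull hvinf W hW, fun u hu hu0 => ?_⟩
  obtain ⟨hu1, hu2⟩ := (hW u).mp hu
  exact statement2_pos n v vinf hv0 hnull hvinf u hu1 hu2 hu0
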